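/- Fix integers u ≥ 2, 1 ≤ s ≤ u−1, m ≥ 1. Let P = {(c,k) : 0 ≤ c < u, 0 ≤ k < h_c} with h_c = m+1 if c < s and h_c = m otherwise, and let g₀ be the Lie algebra of trace-zero P × P complex matrices that vanish off the column-diagonal blocks, with Killing form κ_{g₀}. For a diagonal matrix x indexed by P and a row index k (0 ≤ k ≤ m), let π_k x be the diagonal matrix equal to x minus the mean of x over the row R_k = {p ∈ P : second coordinate of p = k} on R_k, and zero outside R_k; set π_s = π_m (short row) and π_u = Σ_{k=0}^{m−1} π_k (long rows). Let β, β' be trace-zero diagonal matrices whose entries depend only on the column (first coordinate). Then 2·κ_{g₀}(π_s β, π_s β') + κ_{g₀}(π_u β, π_s β') + κ_{g₀}(π_s β, π_u β') = 0. -/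

import Mathlib

attribute [local instance 100] LieRing.ofAssociativeRing

/-- The boxes of the left-adjusted pyramid of the partition `[u^m, s]`: pairs `(c, k)` with
column `c < u` and row `k < h_c`, where `h_c = m+1` if `c < s` and `h_c = m` otherwise. -/
abbrev PyrIdx (u s m : ℕ) :=
  {p : Fin u × Fin (m + 1) // (p.2 : ℕ) < if (p.1 : ℕ) < s then m + 1 else m}

/-- The degree-zero subalgebra `g₀` of `sl_n(ℂ)` (`n = mu + s`) for the good grading attached
to the left-adjusted pyramid of `[u^m, s]`: trace-zero matrices indexed by the boxes of the
pyramid which vanish off the column-diagonal blocks. -/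
def g0 (u s m : ℕ) : LieSubalgebra ℂ (Matrix (PyrIdx u s m) (PyrIdx u s m) ℂ) where
  carrier := {A | Matrix.trace A = 0 ∧ ∀ p q : PyrIdx u s m, p.1.1 ≠ q.1.1 → A p q = 0}
  add_mem' := fun {A B} ha hb =>
    ⟨by simp [Matrix.trace_add, ha.1, hb.1],
      fun p q h => by simp [Matrix.add_apply, ha.2 p q h, hb.2 p q h]⟩
  zero_mem' := ⟨by simp, fun p q h => by simp⟩
  smul_mem' := fun c {A} ha =>
    ⟨by simp [Matrix.trace_smul, ha.1], fun p q h => by simp [Matrix.smul_apply, ha.2 p q h]⟩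
  lie_mem' := fun {A B} ha hb => by
    refine ⟨?_, fun p q h => ?_⟩
    · rw [Ring.lie_def, Matrix.trace_sub, Matrix.trace_mul_comm, sub_self]
    · rw [Ring.lie_def]
      simp only [Matrix.sub_apply, Matrix.mul_apply]
      have h1 : (∑ r : PyrIdx u s m, A p r * B r q) = 0 :=
        Finset.sum_eq_zero fun r _ => by
          by_cases hpr : p.1.1 = r.1.1
          · rw [hb.2 r q fun hrq => h (hpr.trans hrq), mul_zero]
          · rw [ha.2 p r hpr, zero_mul]
      have h2 : (∑ r : PyrIdx u s m, B p r * A r q) = 0 :=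
        Finset.sum_eq_zero fun r _ => by
          by_cases hpr : p.1.1 = r.1.1
          · rw [ha.2 r q fun hrq => h (hpr.trans hrq), mul_zero]
          · rw [hb.2 p r hpr, zero_mul]
      rw [h1, h2, sub_zero]


lemma stdBasis_repr {m n : Type*} [Fintype m] [Fintype n] [DecidableEq m] [DecidableEq n]
    (A : Matrix m n ℂ) (i : m) (j : n) :
    (Matrix.stdBasis ℂ m n).repr A (i, j) = A i j := by
  simp [Matrix.stdBasis, Module.Basis.repr_reindex]

noncomputable def wtMap (u s m : ℕ) (d e : PyrIdx u s m → ℂ) :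
    Matrix (PyrIdx u s m) (PyrIdx u s m) ℂ →ₗ[ℂ] Matrix (PyrIdx u s m) (PyrIdx u s m) ℂ where
  toFun A := Matrix.of fun p q => if p.1.1 = q.1.1 then (d p - d q) * (e p - e q) * A p q else 0
  map_add' A B := by
    ext p q
    by_cases h : p.1.1 = q.1.1 <;> simp [h, Matrix.add_apply, mul_add]
  map_smul' c A := by
    ext p q
    by_cases h : p.1.1 = q.1.1 <;> simp [h, Matrix.smul_apply] <;> ring

lemma trace_wtMap (u s m : ℕ) (d e : PyrIdx u s m → ℂ) :
    LinearMap.trace ℂ _ (wtMap u s m d e)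
      = ∑ p : PyrIdx u s m, ∑ q : PyrIdx u s m,
          if p.1.1 = q.1.1 then (d p - d q) * (e p - e q) else 0 := by
  classical
  rw [LinearMap.trace_eq_matrix_trace ℂ (Matrix.stdBasis ℂ _ _), Matrix.trace]
  unfold Matrix.diag
  rw [Fintype.sum_prod_type]
  refine Finset.sum_congr rfl fun p _ => Finset.sum_congr rfl fun q _ => ?_
  rw [LinearMap.toMatrix_apply, Matrix.stdBasis_eq_single, stdBasis_repr]
  show (if p.1.1 = q.1.1 then (d p - d q) * (e p - e q) * (Matrix.single p q 1 p q) else 0) = _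
  rw [Matrix.single_apply_same, mul_one]

lemma wtMap_apply (u s m : ℕ) (d e : PyrIdx u s m → ℂ)
    (A : Matrix (PyrIdx u s m) (PyrIdx u s m) ℂ) (p q : PyrIdx u s m) :
    wtMap u s m d e A p q
      = if p.1.1 = q.1.1 then (d p - d q) * (e p - e q) * A p q else 0 := rfl

noncomputable def blockProj (u s m : ℕ) :
    Matrix (PyrIdx u s m) (PyrIdx u s m) ℂ →ₗ[ℂ] Matrix (PyrIdx u s m) (PyrIdx u s m) ℂ where
  toFun A := Matrix.of (fun p q => if p.1.1 = q.1.1 then A p q else 0)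
    - (Matrix.trace A / (Fintype.card (PyrIdx u s m) : ℂ)) • 1
  map_add' A B := by
    ext p q
    by_cases h : p.1.1 = q.1.1 <;>
      simp [h, Matrix.add_apply, Matrix.sub_apply, Matrix.smul_apply, add_div, add_smul] <;> ring
  map_smul' c A := by
    ext p q
    by_cases h : p.1.1 = q.1.1 <;>
      simp [h, Matrix.smul_apply, Matrix.sub_apply, mul_div_assoc] <;> ring

lemma pyr_nonempty (u s m : ℕ) (hu : 1 ≤ u) (hs : 1 ≤ s) : Nonempty (PyrIdx u s m) :=
  ⟨⟨(⟨0, hu⟩, ⟨0, Nat.succ_pos m⟩), by simp only [if_pos (show 0 < s from hs)]; exact Nat.succ_pos m⟩⟩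

lemma blockProj_apply (u s m : ℕ) (A : Matrix (PyrIdx u s m) (PyrIdx u s m) ℂ) :
    blockProj u s m A = Matrix.of (fun p q => if p.1.1 = q.1.1 then A p q else 0)
      - (Matrix.trace A / (Fintype.card (PyrIdx u s m) : ℂ)) • 1 := rfl

lemma blockProj_mem (u s m : ℕ) (hu : 1 ≤ u) (hs : 1 ≤ s)
    (A : Matrix (PyrIdx u s m) (PyrIdx u s m) ℂ) : blockProj u s m A ∈ g0 u s m := by
  have hne : Nonempty (PyrIdx u s m) := pyr_nonempty u s m hu hs
  have hcard : (Fintype.card (PyrIdx u s m) : ℂ) ≠ 0 := by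
    exact_mod_cast Nat.cast_ne_zero.mpr Fintype.card_ne_zero
  constructor
  · rw [blockProj_apply, Matrix.trace_sub, Matrix.trace_smul, Matrix.trace_one]
    have h1 : Matrix.trace (Matrix.of fun p q : PyrIdx u s m =>
        if p.1.1 = q.1.1 then A p q else 0) = Matrix.trace A := by
      apply Finset.sum_congr rfl
      intro p _
      simp [Matrix.diag_apply]
    rw [h1]
    rw [smul_eq_mul, div_mul_cancel₀ _ hcard, sub_self]
  · intro p q h
    have hpq : p ≠ q := fun hh => h (by rw [hh])
    rw [blockProj_apply]
    simp [Matrix.sub_apply, Matrix.smul_apply, h, Matrix.one_apply_ne hpq]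

lemma blockProj_of_mem (u s m : ℕ) (A : Matrix (PyrIdx u s m) (PyrIdx u s m) ℂ)
    (hA : A ∈ g0 u s m) : blockProj u s m A = A := by
  obtain ⟨h1, h2⟩ := hA
  rw [blockProj_apply, h1]
  ext p q
  by_cases h : p.1.1 = q.1.1 <;>
    simp [h, Matrix.sub_apply, Matrix.smul_apply, h2 p q]

lemma killingForm_diag (u s m : ℕ) (hu : 1 ≤ u) (hs : 1 ≤ s) (d e : PyrIdx u s m → ℂ)
    (x y : ↥(g0 u s m)) (hx : (x : Matrix (PyrIdx u s m) (PyrIdx u s m) ℂ) = Matrix.diagonal d)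
    (hy : (y : Matrix (PyrIdx u s m) (PyrIdx u s m) ℂ) = Matrix.diagonal e) :
    killingForm ℂ ↥(g0 u s m) x y
      = ∑ p : PyrIdx u s m, ∑ q : PyrIdx u s m,
          if p.1.1 = q.1.1 then (d p - d q) * (e p - e q) else 0 := by
  classical
  rw [killingForm_apply_apply]
  let i : ↥(g0 u s m) →ₗ[ℂ] Matrix (PyrIdx u s m) (PyrIdx u s m) ℂ := (g0 u s m).toSubmodule.subtype
  let r : Matrix (PyrIdx u s m) (PyrIdx u s m) ℂ →ₗ[ℂ] ↥(g0 u s m) :=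
    LinearMap.codRestrict (g0 u s m).toSubmodule (blockProj u s m)
      (fun A => blockProj_mem u s m hu hs A)
  have hri : r ∘ₗ i = LinearMap.id := by
    apply LinearMap.ext
    intro v
    exact Subtype.ext (blockProj_of_mem u s m v.1 v.2)
  set φ := LieAlgebra.ad ℂ ↥(g0 u s m) x ∘ₗ LieAlgebra.ad ℂ ↥(g0 u s m) y with hφ
  have key : i ∘ₗ (φ ∘ₗ r) = wtMap u s m d e := by
    apply LinearMap.ext
    intro A
    have h1 : (i ∘ₗ (φ ∘ₗ r)) A = ((⁅x, ⁅y, r A⁆⁆ : ↥(g0 u s m)) : Matrix (PyrIdx u s m) (PyrIdx u s m) ℂ) := rfl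
    rw [h1, LieSubalgebra.coe_bracket, LieSubalgebra.coe_bracket, hx, hy]
    have h2 : ((r A : ↥(g0 u s m)) : Matrix (PyrIdx u s m) (PyrIdx u s m) ℂ) = blockProj u s m A := rfl
    rw [h2]
    rw [Ring.lie_def, Ring.lie_def, Matrix.mul_sub, Matrix.sub_mul]
    ext p q
    simp only [Matrix.sub_apply, Matrix.diagonal_mul, Matrix.mul_diagonal, wtMap_apply]
    by_cases hpq : p = q
    · subst hpq
      simp only [if_pos rfl]
      ring_nf
      simp
    · have h1 : (1 : Matrix (PyrIdx u s m) (PyrIdx u s m) ℂ) p q = 0 := Matrix.one_apply_ne hpq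
      rw [blockProj_apply]
      simp only [Matrix.sub_apply, Matrix.smul_apply, h1, smul_eq_mul, mul_zero, sub_zero,
        Matrix.of_apply]
      by_cases hc : p.1.1 = q.1.1 <;> simp only [hc, if_true, if_false] <;> ring
  calc LinearMap.trace ℂ ↥(g0 u s m) φ
      = LinearMap.trace ℂ ↥(g0 u s m) (φ ∘ₗ (r ∘ₗ i)) := by rw [hri, LinearMap.comp_id]
    _ = LinearMap.trace ℂ ↥(g0 u s m) ((φ ∘ₗ r) ∘ₗ i) := by simp only [LinearMap.comp_assoc]
    _ = LinearMap.trace ℂ _ (i ∘ₗ (φ ∘ₗ r)) := (LinearMap.trace_comp_comm' (φ ∘ₗ r) i).symm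
    _ = _ := by rw [key, trace_wtMap]


/-- The mean over the row `R_k = {p : second coordinate = k}` of a diagonal matrix whose entry
at the box `p = (c, k)` is `b c`. -/
noncomputable def meanRow (u s m : ℕ) (b : Fin u → ℂ) (k : ℕ) : ℂ :=
  (∑ p ∈ Finset.univ.filter (fun p : PyrIdx u s m => (p.1.2 : ℕ) = k), b p.1.1) /
    ((Finset.univ.filter (fun p : PyrIdx u s m => (p.1.2 : ℕ) = k)).card : ℂ)

/-- `π_s β`: the component of the column-constant diagonal matrix `β` (entries `b c`) along the
short row (row `m`): on the short row subtract the row mean, zero elsewhere. -/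
noncomputable def piS (u s m : ℕ) (b : Fin u → ℂ) :
    Matrix (PyrIdx u s m) (PyrIdx u s m) ℂ :=
  Matrix.diagonal fun p => if (p.1.2 : ℕ) = m then b p.1.1 - meanRow u s m b m else 0

/-- `π_u β = Σ_{k<m} π_k β`: the component of `β` along the long rows (rows `k < m`): there
subtract the corresponding row mean, zero on the short row. -/
noncomputable def piU (u s m : ℕ) (b : Fin u → ℂ) :
    Matrix (PyrIdx u s m) (PyrIdx u s m) ℂ :=
  Matrix.diagonal fun p =>
    if (p.1.2 : ℕ) < m then b p.1.1 - meanRow u s m b (p.1.2 : ℕ) else 0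


lemma sum_pyr (u s m : ℕ) (F : Fin u × Fin (m + 1) → ℂ) :
    ∑ p : PyrIdx u s m, F p.1
      = ∑ c : Fin u, ∑ k : Fin (m + 1),
          if (k : ℕ) < (if (c : ℕ) < s then m + 1 else m) then F (c, k) else 0 := by
  classical
  calc ∑ p : PyrIdx u s m, F p.1
      = ∑ p ∈ Finset.univ.filter
          (fun p : Fin u × Fin (m + 1) => (p.2 : ℕ) < if (p.1 : ℕ) < s then m + 1 else m), F p :=
        (Finset.sum_subtype _ (by simp) F).symm
    _ = ∑ p : Fin u × Fin (m + 1),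
          if (p.2 : ℕ) < (if (p.1 : ℕ) < s then m + 1 else m) then F p else 0 :=
        Finset.sum_filter _ _
    _ = _ := Fintype.sum_prod_type _

lemma quad {ι : Type*} [Fintype ι] (χ d e : ι → ℂ) :
    ∑ k : ι, ∑ k' : ι, χ k * (χ k' * ((d k - d k') * (e k - e k')))
      = 2 * (∑ k : ι, χ k) * (∑ k : ι, χ k * (d k * e k))
        - 2 * (∑ k : ι, χ k * d k) * (∑ k : ι, χ k * e k) := by
  have h : ∀ k : ι, ∑ k' : ι, χ k * (χ k' * ((d k - d k') * (e k - e k')))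
      = (χ k * (d k * e k)) * (∑ k' : ι, χ k') - (χ k * d k) * (∑ k' : ι, χ k' * e k')
        - (χ k * e k) * (∑ k' : ι, χ k' * d k')
        + χ k * (∑ k' : ι, χ k' * (d k' * e k')) := by
    intro k
    rw [Finset.mul_sum, Finset.mul_sum, Finset.mul_sum, Finset.mul_sum,
      ← Finset.sum_sub_distrib, ← Finset.sum_sub_distrib, ← Finset.sum_add_distrib]
    exact Finset.sum_congr rfl fun k' _ => by ring
  rw [Finset.sum_congr rfl fun k _ => h k, Finset.sum_add_distrib, Finset.sum_sub_distrib,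
    Finset.sum_sub_distrib, ← Finset.sum_mul, ← Finset.sum_mul, ← Finset.sum_mul,
    ← Finset.sum_mul]
  ring

lemma collapse {u m' : ℕ} (c : Fin u) (H : Fin u → ℕ) (D : Fin u → Fin m' → ℂ) :
    ∑ c' : Fin u, ∑ k' : Fin m',
        (if (k' : ℕ) < H c' then (if c = c' then D c' k' else 0) else 0)
      = ∑ k' : Fin m', if (k' : ℕ) < H c then D c k' else 0 := by
  have h1 : ∀ (c' : Fin u) (k' : Fin m'), (if (k' : ℕ) < H c' then (if c = c' then D c' k' else 0) else 0)
      = if c = c' then (if (k' : ℕ) < H c' then D c' k' else 0) else 0 := by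
    intro c' k'; split_ifs <;> rfl
  simp_rw [h1]
  have h2 : ∀ c' : Fin u, (∑ k' : Fin m',
      if c = c' then (if (k' : ℕ) < H c' then D c' k' else 0) else 0)
      = if c = c' then (∑ k' : Fin m', if (k' : ℕ) < H c' then D c' k' else 0) else 0 := by
    intro c'
    split_ifs <;> simp
  rw [Finset.sum_congr rfl fun c' _ => h2 c', Finset.sum_ite_eq Finset.univ c
    (fun c' => ∑ k' : Fin m', if (k' : ℕ) < H c' then D c' k' else 0), if_pos (Finset.mem_univ c)]

lemma sum_eq_last {m : ℕ} (f : Fin (m + 1) → ℂ) :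
    (∑ k : Fin (m + 1), if (k : ℕ) = m then f k else 0) = f (Fin.last m) := by
  have h : ∀ k : Fin (m + 1), ((k : ℕ) = m) = (k = Fin.last m) := by
    intro k
    simp [Fin.ext_iff, Fin.val_last]
  simp_rw [h]
  rw [Finset.sum_ite_eq' Finset.univ (Fin.last m) f]
  simp

lemma sum_lt_const {m : ℕ} (x : ℂ) :
    (∑ k : Fin (m + 1), if (k : ℕ) < m then x else 0) = (m : ℂ) * x := by
  have h : ∀ k : Fin (m + 1), (if (k : ℕ) < m then x else 0)
      = x - (if (k : ℕ) = m then x else 0) := by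
    intro k
    have hk : (k : ℕ) < m + 1 := k.isLt
    rcases Nat.lt_succ_iff_lt_or_eq.mp hk with h | h
    · rw [if_pos h, if_neg (Nat.ne_of_lt h), sub_zero]
    · rw [if_neg (by omega), if_pos h, sub_self]
  simp_rw [h]
  rw [Finset.sum_sub_distrib, sum_eq_last (fun _ => x), Finset.sum_const, Finset.card_univ,
    Fintype.card_fin, nsmul_eq_mul]
  push_cast
  ring

lemma cardS (u s : ℕ) (hsu : s ≤ u) :
    (∑ c : Fin u, if (c : ℕ) < s then (1 : ℂ) else 0) = (s : ℂ) := by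
  rw [Fin.sum_univ_eq_sum_range (fun j => if j < s then (1 : ℂ) else 0), ← Finset.sum_filter]
  have h : (Finset.range u).filter (fun j => j < s) = Finset.range s := by
    ext j
    simp only [Finset.mem_filter, Finset.mem_range]
    omega
  rw [h, Finset.sum_const, Finset.card_range, nsmul_eq_mul, mul_one]


noncomputable def DS (u s m : ℕ) (f : Fin u → ℂ) : Fin u × Fin (m + 1) → ℂ :=
  fun q => if (q.2 : ℕ) = m then f q.1 - meanRow u s m f m else 0

noncomputable def DU (u s m : ℕ) (f : Fin u → ℂ) : Fin u × Fin (m + 1) → ℂ :=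
  fun q => if (q.2 : ℕ) < m then f q.1 - meanRow u s m f (q.2 : ℕ) else 0

noncomputable def chi (s m : ℕ) {u : ℕ} (c : Fin u) (k : Fin (m + 1)) : ℂ :=
  if (k : ℕ) < (if (c : ℕ) < s then m + 1 else m) then 1 else 0

lemma chi_spec (s m : ℕ) {u : ℕ} (c : Fin u) (k : Fin (m + 1)) (X : ℂ) :
    (if (k : ℕ) < (if (c : ℕ) < s then m + 1 else m) then X else 0) = chi s m c k * X := by
  unfold chi; split_ifs <;> simp

lemma SS_eq (u s m : ℕ) (D E : Fin u × Fin (m + 1) → ℂ) :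
    (∑ p : PyrIdx u s m, ∑ q : PyrIdx u s m,
        if p.1.1 = q.1.1 then (D p.1 - D q.1) * (E p.1 - E q.1) else 0)
      = ∑ c : Fin u,
          (2 * (∑ k : Fin (m + 1), chi s m c k)
              * (∑ k : Fin (m + 1), chi s m c k * (D (c, k) * E (c, k)))
            - 2 * (∑ k : Fin (m + 1), chi s m c k * D (c, k))
              * (∑ k : Fin (m + 1), chi s m c k * E (c, k))) := by
  classical
  rw [show (∑ p : PyrIdx u s m, ∑ q : PyrIdx u s m,
        if p.1.1 = q.1.1 then (D p.1 - D q.1) * (E p.1 - E q.1) else 0)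
      = ∑ p : PyrIdx u s m, (fun pv : Fin u × Fin (m + 1) =>
          ∑ q : PyrIdx u s m,
            if pv.1 = q.1.1 then (D pv - D q.1) * (E pv - E q.1) else 0) p.1 from rfl]
  rw [sum_pyr u s m (fun pv : Fin u × Fin (m + 1) =>
      ∑ q : PyrIdx u s m, if pv.1 = q.1.1 then (D pv - D q.1) * (E pv - E q.1) else 0)]
  refine Finset.sum_congr rfl fun c _ => ?_
  have hq : ∀ kk : Fin (m + 1),
      (∑ q : PyrIdx u s m,
          if (c, kk).1 = q.1.1 then (D (c, kk) - D q.1) * (E (c, kk) - E q.1) else 0)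
        = ∑ c' : Fin u, ∑ k' : Fin (m + 1),
            if (k' : ℕ) < (if (c' : ℕ) < s then m + 1 else m) then
              (if c = c' then (D (c, kk) - D (c', k')) * (E (c, kk) - E (c', k')) else 0)
            else 0 := by
    intro kk
    exact sum_pyr u s m
      (fun qv => if c = qv.1 then (D (c, kk) - D qv) * (E (c, kk) - E qv) else 0)
  simp only [hq]
  have hcol : ∀ k : Fin (m + 1),
      (∑ c' : Fin u, ∑ k' : Fin (m + 1),
          if (k' : ℕ) < (if (c' : ℕ) < s then m + 1 else m) then
            (if c = c' then (D (c, k) - D (c', k')) * (E (c, k) - E (c', k')) else 0) else 0)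
        = ∑ k' : Fin (m + 1),
            if (k' : ℕ) < (if (c : ℕ) < s then m + 1 else m) then
              (D (c, k) - D (c, k')) * (E (c, k) - E (c, k')) else 0 :=
    fun k => collapse c (fun c' => if (c' : ℕ) < s then m + 1 else m)
      (fun c' k' => (D (c, k) - D (c', k')) * (E (c, k) - E (c', k')))
  simp only [hcol]
  refine Eq.trans ?_ (quad (chi s m c) (fun k => D (c, k)) (fun k => E (c, k)))
  refine Finset.sum_congr rfl fun k _ => ?_
  rw [chi_spec, Finset.mul_sum]
  exact Finset.sum_congr rfl fun k' _ => by rw [chi_spec]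

lemma chi_sum (u s m : ℕ) (c : Fin u) :
    (∑ k : Fin (m + 1), chi s m c k) = if (c : ℕ) < s then (m : ℂ) + 1 else (m : ℂ) := by
  unfold chi
  by_cases hc : (c : ℕ) < s
  · simp only [hc, if_true]
    have h : ∀ k : Fin (m + 1), (if (k : ℕ) < m + 1 then (1 : ℂ) else 0) = 1 :=
      fun k => if_pos k.isLt
    simp_rw [h]
    rw [Finset.sum_const, Finset.card_univ, Fintype.card_fin, nsmul_eq_mul, mul_one]
    push_cast; ring
  · simp only [hc, if_false]
    rw [sum_lt_const, mul_one]

lemma chiDS_sum (u s m : ℕ) (f : Fin u → ℂ) (c : Fin u) :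
    (∑ k : Fin (m + 1), chi s m c k * DS u s m f (c, k))
      = if (c : ℕ) < s then f c - meanRow u s m f m else 0 := by
  have h : ∀ k : Fin (m + 1), chi s m c k * DS u s m f (c, k)
      = if (k : ℕ) = m then
          (if (c : ℕ) < s then f c - meanRow u s m f m else 0) else 0 := by
    intro k
    unfold chi DS
    by_cases hk : (k : ℕ) = m
    · by_cases hc : (c : ℕ) < s
      · have h1 : (k : ℕ) < (if (c : ℕ) < s then m + 1 else m) := by
          rw [if_pos hc]; omega
        rw [if_pos h1, if_pos hk, if_pos hk, if_pos hc, one_mul]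
      · have h1 : ¬((k : ℕ) < (if (c : ℕ) < s then m + 1 else m)) := by
          rw [if_neg hc]; omega
        rw [if_neg h1, zero_mul, if_pos hk, if_neg hc]
    · rw [if_neg hk, if_neg hk, mul_zero]
  simp_rw [h]
  rw [sum_eq_last]

lemma chiDSDS (u s m : ℕ) (f g : Fin u → ℂ) (c : Fin u) :
    (∑ k : Fin (m + 1), chi s m c k * (DS u s m f (c, k) * DS u s m g (c, k)))
      = if (c : ℕ) < s then (f c - meanRow u s m f m) * (g c - meanRow u s m g m) else 0 := by
  have h : ∀ k : Fin (m + 1), chi s m c k * (DS u s m f (c, k) * DS u s m g (c, k))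
      = if (k : ℕ) = m then
          (if (c : ℕ) < s then
            (f c - meanRow u s m f m) * (g c - meanRow u s m g m) else 0) else 0 := by
    intro k
    unfold chi DS
    by_cases hk : (k : ℕ) = m
    · by_cases hc : (c : ℕ) < s
      · have h1 : (k : ℕ) < (if (c : ℕ) < s then m + 1 else m) := by
          rw [if_pos hc]; omega
        rw [if_pos h1, if_pos hk, if_pos hk, if_pos hk, if_pos hc, one_mul]
      · have h1 : ¬((k : ℕ) < (if (c : ℕ) < s then m + 1 else m)) := by
          rw [if_neg hc]; omega
        rw [if_neg h1, zero_mul, if_pos hk, if_neg hc]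
    · rw [if_neg hk, if_neg hk, if_neg hk, zero_mul, mul_zero]
  simp_rw [h]
  rw [sum_eq_last]

lemma chiDU_sum (u s m : ℕ) (f : Fin u → ℂ) (c : Fin u) :
    (∑ k : Fin (m + 1), chi s m c k * DU u s m f (c, k))
      = (m : ℂ) * f c
        - ∑ k : Fin (m + 1), (if (k : ℕ) < m then meanRow u s m f (k : ℕ) else 0) := by
  have h : ∀ k : Fin (m + 1), chi s m c k * DU u s m f (c, k)
      = (if (k : ℕ) < m then f c else 0)
        - (if (k : ℕ) < m then meanRow u s m f (k : ℕ) else 0) := by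
    intro k
    unfold chi DU
    by_cases hk : (k : ℕ) < m
    · have h1 : (k : ℕ) < (if (c : ℕ) < s then m + 1 else m) := by split_ifs <;> omega
      rw [if_pos h1, one_mul, if_pos hk, if_pos hk, if_pos hk]
    · rw [if_neg hk, mul_zero, if_neg hk, if_neg hk, sub_zero]
  simp_rw [h]
  rw [Finset.sum_sub_distrib, sum_lt_const]

lemma chiDUDS (u s m : ℕ) (f g : Fin u → ℂ) (c : Fin u) :
    (∑ k : Fin (m + 1), chi s m c k * (DU u s m f (c, k) * DS u s m g (c, k))) = 0 := by
  refine Finset.sum_eq_zero fun k _ => ?_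
  unfold DS DU
  by_cases hk : (k : ℕ) < m
  · rw [if_neg (by omega : ¬((k : ℕ) = m)), mul_zero, mul_zero]
  · rw [if_neg hk, zero_mul, mul_zero]

lemma chiDSDU (u s m : ℕ) (f g : Fin u → ℂ) (c : Fin u) :
    (∑ k : Fin (m + 1), chi s m c k * (DS u s m f (c, k) * DU u s m g (c, k))) = 0 := by
  refine Finset.sum_eq_zero fun k _ => ?_
  unfold DS DU
  by_cases hk : (k : ℕ) < m
  · rw [if_neg (by omega : ¬((k : ℕ) = m)), zero_mul, mul_zero]
  · rw [if_neg hk, mul_zero, mul_zero]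

lemma mean_rel (u s m : ℕ) (hu : 2 ≤ u) (hs1 : 1 ≤ s) (hs2 : s ≤ u - 1) (f : Fin u → ℂ) :
    (∑ c : Fin u, if (c : ℕ) < s then f c - meanRow u s m f m else 0) = 0 := by
  classical
  have hsu : s ≤ u := by omega
  have hfilter : ∀ g : Fin u → ℂ,
      (∑ p ∈ Finset.univ.filter (fun p : PyrIdx u s m => ((p.1.2 : ℕ) = m)), g p.1.1)
        = ∑ c : Fin u, if (c : ℕ) < s then g c else 0 := by
    intro g
    rw [Finset.sum_filter]
    rw [show (∑ p : PyrIdx u s m, if ((p.1.2 : ℕ) = m) then g p.1.1 else 0)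
        = ∑ p : PyrIdx u s m, (fun pv : Fin u × Fin (m + 1) =>
            if (pv.2 : ℕ) = m then g pv.1 else 0) p.1 from rfl]
    rw [sum_pyr u s m (fun pv : Fin u × Fin (m + 1) => if (pv.2 : ℕ) = m then g pv.1 else 0)]
    refine Finset.sum_congr rfl fun c _ => ?_
    have h : ∀ k : Fin (m + 1),
        (if (k : ℕ) < (if (c : ℕ) < s then m + 1 else m) then
            (if (k : ℕ) = m then g c else 0) else 0)
          = if (k : ℕ) = m then (if (c : ℕ) < s then g c else 0) else 0 := by
      intro k
      split_ifs <;> first | rfl | omega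
    simp_rw [h]
    rw [sum_eq_last]
  have hcard : ((Finset.univ.filter (fun p : PyrIdx u s m => ((p.1.2 : ℕ) = m))).card : ℂ)
      = (s : ℂ) := by
    rw [Finset.card_eq_sum_ones]
    push_cast
    rw [show (∑ p ∈ Finset.univ.filter (fun p : PyrIdx u s m => ((p.1.2 : ℕ) = m)), (1 : ℂ))
        = ∑ p ∈ Finset.univ.filter (fun p : PyrIdx u s m => ((p.1.2 : ℕ) = m)),
            (fun _ : Fin u => (1 : ℂ)) p.1.1 from rfl]
    rw [hfilter (fun _ => (1 : ℂ)), cardS u s hsu]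
  have hmean : meanRow u s m f m = (∑ c : Fin u, if (c : ℕ) < s then f c else 0) / (s : ℂ) := by
    rw [meanRow, hfilter f, hcard]
  have h : ∀ c : Fin u, (if (c : ℕ) < s then f c - meanRow u s m f m else 0)
      = (if (c : ℕ) < s then f c else 0)
        - meanRow u s m f m * (if (c : ℕ) < s then (1 : ℂ) else 0) := by
    intro c; split_ifs <;> ring
  simp_rw [h]
  rw [Finset.sum_sub_distrib, ← Finset.mul_sum, cardS u s hsu, hmean]
  have hs0 : (s : ℂ) ≠ 0 := Nat.cast_ne_zero.mpr (by omega)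
  field_simp
  ring

/-- Lemma 4.24 part (2): for trace-zero diagonal matrices `β, β'` whose entries
depend only on the column, `2κ_{g₀}(π_s β, π_s β') + κ_{g₀}(π_u β, π_s β')
+ κ_{g₀}(π_s β, π_u β') = 0`. -/
theorem killing_form_projection_relation (u s m : ℕ) (hu : 2 ≤ u) (hs1 : 1 ≤ s)
    (hs2 : s ≤ u - 1) (hm : 1 ≤ m) (b b' : Fin u → ℂ)
    (hb : ∑ p : PyrIdx u s m, b p.1.1 = 0)
    (hb' : ∑ p : PyrIdx u s m, b' p.1.1 = 0)
    (psb psb' pub pub' : ↥(g0 u s m))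
    (hpsb : (psb : Matrix (PyrIdx u s m) (PyrIdx u s m) ℂ) = piS u s m b)
    (hpsb' : (psb' : Matrix (PyrIdx u s m) (PyrIdx u s m) ℂ) = piS u s m b')
    (hpub : (pub : Matrix (PyrIdx u s m) (PyrIdx u s m) ℂ) = piU u s m b)
    (hpub' : (pub' : Matrix (PyrIdx u s m) (PyrIdx u s m) ℂ) = piU u s m b') :
    2 * killingForm ℂ ↥(g0 u s m) psb psb'
      + killingForm ℂ ↥(g0 u s m) pub psb'
      + killingForm ℂ ↥(g0 u s m) psb pub' = 0 := by
  classical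
  have hu1 : 1 ≤ u := by omega
  have e1 := killingForm_diag u s m hu1 hs1
    (fun p => DS u s m b p.1) (fun p => DS u s m b' p.1) psb psb'
    (by rw [hpsb]; rfl) (by rw [hpsb']; rfl)
  have e2 := killingForm_diag u s m hu1 hs1
    (fun p => DU u s m b p.1) (fun p => DS u s m b' p.1) pub psb'
    (by rw [hpub]; rfl) (by rw [hpsb']; rfl)
  have e3 := killingForm_diag u s m hu1 hs1
    (fun p => DS u s m b p.1) (fun p => DU u s m b' p.1) psb pub'
    (by rw [hpsb]; rfl) (by rw [hpub']; rfl)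
  rw [e1, e2, e3]
  beta_reduce
  rw [SS_eq u s m (DS u s m b) (DS u s m b'), SS_eq u s m (DU u s m b) (DS u s m b'),
    SS_eq u s m (DS u s m b) (DU u s m b')]
  rw [Finset.mul_sum, ← Finset.sum_add_distrib, ← Finset.sum_add_distrib]
  have key : ∀ c : Fin u,
      2 * (2 * (∑ k : Fin (m + 1), chi s m c k)
            * (∑ k : Fin (m + 1), chi s m c k * (DS u s m b (c, k) * DS u s m b' (c, k)))
          - 2 * (∑ k : Fin (m + 1), chi s m c k * DS u s m b (c, k))
            * (∑ k : Fin (m + 1), chi s m c k * DS u s m b' (c, k)))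
        + (2 * (∑ k : Fin (m + 1), chi s m c k)
            * (∑ k : Fin (m + 1), chi s m c k * (DU u s m b (c, k) * DS u s m b' (c, k)))
          - 2 * (∑ k : Fin (m + 1), chi s m c k * DU u s m b (c, k))
            * (∑ k : Fin (m + 1), chi s m c k * DS u s m b' (c, k)))
        + (2 * (∑ k : Fin (m + 1), chi s m c k)
            * (∑ k : Fin (m + 1), chi s m c k * (DS u s m b (c, k) * DU u s m b' (c, k)))
          - 2 * (∑ k : Fin (m + 1), chi s m c k * DS u s m b (c, k))
            * (∑ k : Fin (m + 1), chi s m c k * DU u s m b' (c, k)))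
      = 2 * ((∑ k : Fin (m + 1), if (k : ℕ) < m then meanRow u s m b (k : ℕ) else 0)
              - (m : ℂ) * meanRow u s m b m)
          * (if (c : ℕ) < s then b' c - meanRow u s m b' m else 0)
        + 2 * ((∑ k : Fin (m + 1), if (k : ℕ) < m then meanRow u s m b' (k : ℕ) else 0)
              - (m : ℂ) * meanRow u s m b' m)
          * (if (c : ℕ) < s then b c - meanRow u s m b m else 0) := by
    intro c
    rw [chi_sum, chiDSDS, chiDS_sum, chiDS_sum, chiDUDS, chiDU_sum, chiDSDU, chiDU_sum]
    by_cases hc : (c : ℕ) < s <;> simp only [hc, if_true, if_false] <;> ring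
  rw [Finset.sum_congr rfl fun c _ => key c]
  rw [Finset.sum_add_distrib, ← Finset.mul_sum, ← Finset.mul_sum,
    mean_rel u s m hu hs1 hs2 b', mean_rel u s m hu hs1 hs2 b, mul_zero, mul_zero, add_zero]
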